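/- In any orientation of the n-hypercube given by an outmap s : {0,1}^n → {0,1}^n, if s is not a USO outmap then there exist two distinct vertices u, v that clash, i.e., (s(u) XOR s(v)) AND (u XOR v) = 0^n; hence every outmap either admits a sink (vertex u with s(u) = 0^n) or a clash. In particular, if s has no clash, then s has a sink. -/
import Mathlib


/-- `s` is the outmap of a unique sink orientation (Szabó–Welzl criterion). -/
def IsUSO {ι : Type*} (s : (ι → Bool) → (ι → Bool)) : Prop :=
  ∀ u v : ι → Bool, u ≠ v → ∃ i, u i ≠ v i ∧ s u i ≠ s v i

/-- Distinct vertices `u, v` clash: `s u` and `s v` agree on every coordinate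
where `u` and `v` differ. -/
def Clash {ι : Type*} (s : (ι → Bool) → (ι → Bool)) (u v : ι → Bool) : Prop :=
  u ≠ v ∧ ∀ i, u i ≠ v i → s u i = s v i

/-- Totality of Sink-or-Clash: if `s` is not a USO outmap then some pair of
vertices clashes; hence every outmap has a sink or a clash, and in particular
an outmap with no clash has a sink. -/
theorem stmt3 (n : ℕ) (s : (Fin n → Bool) → (Fin n → Bool)) :
    (¬ IsUSO s → ∃ u v, Clash s u v) ∧
    ((∃ u, s u = fun _ => false) ∨ ∃ u v, Clash s u v) ∧
    ((¬ ∃ u v, Clash s u v) → ∃ u, s u = fun _ => false) := by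
  have key : (¬ ∃ u v, Clash s u v) → ∃ u, s u = fun _ => false := by
    intro h
    have hinj : Function.Injective s := by
      intro u v huv
      by_contra hne
      exact h ⟨u, v, hne, fun i _ => congrFun huv i⟩
    have hsurj := Finite.surjective_of_injective hinj
    exact hsurj (fun _ => false)
  refine ⟨?_, ?_, key⟩
  · intro hnot
    simp only [IsUSO, not_forall, not_exists] at hnot
    obtain ⟨u, v, hne, hcl⟩ := hnot
    refine ⟨u, v, hne, fun i hi => ?_⟩
    have := hcl i
    tauto
  · by_cases h : ∃ u v, Clash s u v
    · exact Or.inr h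
    · exact Or.inl (key h)
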